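/- Let F be an admissible Finsler structure on Ω with intrinsic distance δ_F. If u ∈ Lip(Ω) satisfies ess sup_{x∈Ω} F(x, ∇u(x)) ≤ 1, then the pointwise Lipschitz constant with respect to δ_F satisfies Lip_{δ_F} u(x) ≤ 1 for every x ∈ Ω. -/

import Mathlib

open MeasureTheory Filter Topology Set

/-- The intrinsic distance `δ_F(x,y) := sup {v(x) − v(y) : v ∈ Lip(Ω),
ess sup F(·,∇v) ≤ 1}` associated to a Finsler structure `F` on `Ω`. -/
noncomputable def deltaF {n : ℕ} (F : EuclideanSpace ℝ (Fin n) → EuclideanSpace ℝ (Fin n) → ℝ)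
    (Ω : Set (EuclideanSpace ℝ (Fin n))) (x y : EuclideanSpace ℝ (Fin n)) : ℝ :=
  sSup {t : ℝ | ∃ w : EuclideanSpace ℝ (Fin n) → ℝ,
    (∃ K : NNReal, LipschitzOnWith K w Ω) ∧
    (∀ᵐ z ∂(volume.restrict Ω), F z (gradient w z) ≤ 1) ∧
    t = w x - w y}

lemma gradient_neg_aux {n : ℕ} (u : EuclideanSpace ℝ (Fin n) → ℝ)
    (z : EuclideanSpace ℝ (Fin n)) :
    gradient (fun w => -u w) z = -gradient u z := by
  simp only [gradient, fderiv_fun_neg, map_neg]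

/-- if `u` is Lipschitz on `Ω` with `ess sup_{x∈Ω} F(x,∇u(x)) ≤ 1`, then
the pointwise Lipschitz constant of `u` with respect to `δ_F` is at most `1`
everywhere on `Ω`. -/
theorem stmt9 {n : ℕ} (hn : 2 ≤ n) (Ω : Set (EuclideanSpace ℝ (Fin n)))
    (hΩopen : IsOpen Ω) (hΩconn : IsConnected Ω)
    (F : EuclideanSpace ℝ (Fin n) → EuclideanSpace ℝ (Fin n) → ℝ)
    (hF0 : ∀ x v, 0 ≤ F x v)
    (hmeas : ∀ v, Measurable fun x => F x v)
    (lam : EuclideanSpace ℝ (Fin n) → ℝ)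
    (hlam_cont : ContinuousOn lam Ω) (hlam1 : ∀ x ∈ Ω, 1 ≤ lam x)
    (hae : ∀ᵐ x ∂(volume.restrict Ω),
      (∀ v, F x v = 0 ↔ v = 0) ∧
      (∀ (c : ℝ) (v), F x (c • v) = |c| * F x v) ∧
      (∀ v w, F x (v + w) ≤ F x v + F x w) ∧
      (∀ v, (lam x)⁻¹ * ‖v‖ ≤ F x v ∧ F x v ≤ lam x * ‖v‖))
    (u : EuclideanSpace ℝ (Fin n) → ℝ)
    (hu : ∃ K : NNReal, LipschitzOnWith K u Ω)
    (hu1 : ∀ᵐ x ∂(volume.restrict Ω), F x (gradient u x) ≤ 1) :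
    ∀ x ∈ Ω,
      Filter.limsup (fun y => |u y - u x| / deltaF F Ω x y) (nhdsWithin x (Ω \ {x})) ≤ 1 := by
  intro x hx
  -- pointwise bound
  have key : ∀ y, |u y - u x| / deltaF F Ω x y ≤ 1 := by
    intro y
    set S := {t : ℝ | ∃ w : EuclideanSpace ℝ (Fin n) → ℝ,
      (∃ K : NNReal, LipschitzOnWith K w Ω) ∧
      (∀ᵐ z ∂(volume.restrict Ω), F z (gradient w z) ≤ 1) ∧
      t = w x - w y} with hS
    by_cases hb : BddAbove S
    · have h1 : u x - u y ∈ S := ⟨u, hu, hu1, rfl⟩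
      have hlipneg : ∃ K : NNReal, LipschitzOnWith K (fun w => -u w) Ω := by
        obtain ⟨K, hK⟩ := hu
        exact ⟨K, fun a ha b hb => by
          simpa [edist_neg_neg] using hK ha hb⟩
      have haeneg : ∀ᵐ z ∂(volume.restrict Ω),
          F z (gradient (fun w => -u w) z) ≤ 1 := by
        filter_upwards [hu1, hae] with z h1 h2
        rw [gradient_neg_aux]
        have : F z (-gradient u z) = F z (gradient u z) := by
          have := h2.2.1 (-1) (gradient u z)
          simpa using this
        rw [this]; exact h1
      have h2 : u y - u x ∈ S := ⟨fun w => -u w, hlipneg, haeneg, by ring⟩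
      have hle : |u y - u x| ≤ sSup S := by
        rcases abs_cases (u y - u x) with ⟨h, _⟩ | ⟨h, _⟩
        · rw [h]; exact le_csSup hb h2
        · rw [h]; have : -(u y - u x) = u x - u y := by ring
          rw [this]; exact le_csSup hb h1
      have hnn : (0:ℝ) ≤ sSup S := le_trans (abs_nonneg _) hle
      exact div_le_one_of_le₀ hle hnn
    · have : deltaF F Ω x y = 0 := Real.sSup_of_not_bddAbove hb
      rw [this, div_zero]; norm_num
  -- the punctured neighbourhood filter is nontrivial
  haveI : Nontrivial (EuclideanSpace ℝ (Fin n)) := by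
    have hn0 : 0 < n := by omega
    refine ⟨EuclideanSpace.single ⟨0, hn0⟩ 1, 0, ?_⟩
    intro h
    have := congrArg (fun v : EuclideanSpace ℝ (Fin n) => v ⟨0, hn0⟩) h
    simp [EuclideanSpace.single] at this
  haveI hne : (𝓝[Ω \ {x}] x).NeBot := by
    rw [diff_eq, nhdsWithin_inter_of_mem
      (mem_nhdsWithin_of_mem_nhds (hΩopen.mem_nhds hx))]
    exact Module.punctured_nhds_neBot ℝ _ x
  have hnonneg : ∀ y, 0 ≤ |u y - u x| / deltaF F Ω x y := by
    intro y
    have hd : 0 ≤ deltaF F Ω x y := by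
      by_cases hb : BddAbove {t : ℝ | ∃ w : EuclideanSpace ℝ (Fin n) → ℝ,
        (∃ K : NNReal, LipschitzOnWith K w Ω) ∧
        (∀ᵐ z ∂(volume.restrict Ω), F z (gradient w z) ≤ 1) ∧
        t = w x - w y}
      · refine le_csSup hb ⟨fun _ => 0, ⟨0, (LipschitzWith.const (0:ℝ)).lipschitzOnWith⟩, ?_, by ring⟩
        filter_upwards [hae] with z h2
        have h0 : F z (0 : EuclideanSpace ℝ (Fin n)) = 0 := by
          have := h2.2.1 0 0
          simpa using this
        simpa [gradient_const, h0] using zero_le_one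
      · exact le_of_eq (Real.sSup_of_not_bddAbove hb).symm
    exact div_nonneg (abs_nonneg _) hd
  exact Filter.limsup_le_of_le
    (Filter.isCoboundedUnder_le_of_le _ hnonneg)
    (Eventually.of_forall key)
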